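/- Let k ≥ 4 lines through the origin in ℝ², pairwise distinct, be given. There exists a lattice Λ ⊂ ℝ² meeting each line nontrivially if and only if the cross-ratio of every four of these lines (viewed as points of ℝP¹) is rational. -/

import Mathlib

/-- Cross-ratio of four points of ℝP¹ given by representatives in ℝ² \ {0}. -/
noncomputable def crossRatio (P₁ P₂ P₃ P₄ : ℝ × ℝ) : ℝ :=
  ((P₁.1 * P₃.2 - P₁.2 * P₃.1) * (P₂.1 * P₄.2 - P₂.2 * P₄.1)) /
  ((P₁.1 * P₄.2 - P₁.2 * P₄.1) * (P₂.1 * P₃.2 - P₂.2 * P₃.1))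

lemma pair_li {P Q : ℝ × ℝ} (h : P.1 * Q.2 - P.2 * Q.1 ≠ 0) :
    LinearIndependent ℝ ![P, Q] := by
  rw [LinearIndependent.pair_iff]
  intro s t hst
  have h1 : s * P.1 + t * Q.1 = 0 := by
    have := congrArg Prod.fst hst; simpa [smul_eq_mul] using this
  have h2 : s * P.2 + t * Q.2 = 0 := by
    have := congrArg Prod.snd hst; simpa [smul_eq_mul] using this
  constructor
  · have hs : s * (P.1 * Q.2 - P.2 * Q.1) = 0 := by
      linear_combination Q.2 * h1 - Q.1 * h2
    rcases mul_eq_zero.mp hs with h' | h'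
    · exact h'
    · exact absurd h' h
  · have ht : t * (P.1 * Q.2 - P.2 * Q.1) = 0 := by
      linear_combination P.1 * h2 - P.2 * h1
    rcases mul_eq_zero.mp ht with h' | h'
    · exact h'
    · exact absurd h' h

noncomputable def pairBasis {P Q : ℝ × ℝ} (h : P.1 * Q.2 - P.2 * Q.1 ≠ 0) :
    Module.Basis (Fin 2) ℝ (ℝ × ℝ) :=
  basisOfLinearIndependentOfCardEqFinrank (pair_li h) (by simp)

lemma pairBasis_zero {P Q : ℝ × ℝ} (h : P.1 * Q.2 - P.2 * Q.1 ≠ 0) :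
    pairBasis h 0 = P := by
  simp [pairBasis, coe_basisOfLinearIndependentOfCardEqFinrank]

lemma pairBasis_one {P Q : ℝ × ℝ} (h : P.1 * Q.2 - P.2 * Q.1 ≠ 0) :
    pairBasis h 1 = Q := by
  simp [pairBasis, coe_basisOfLinearIndependentOfCardEqFinrank]

lemma cramer2 (B0 B1 V : ℝ × ℝ) (hD : B0.1 * B1.2 - B0.2 * B1.1 ≠ 0) :
    V = ((V.1 * B1.2 - V.2 * B1.1) / (B0.1 * B1.2 - B0.2 * B1.1)) • B0 +
        ((B0.1 * V.2 - B0.2 * V.1) / (B0.1 * B1.2 - B0.2 * B1.1)) • B1 := by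
  apply Prod.ext_iff.mpr
  constructor <;>
    (simp only [Prod.fst_add, Prod.snd_add, Prod.smul_fst, Prod.smul_snd, smul_eq_mul];
     rw [div_mul_eq_mul_div, div_mul_eq_mul_div, ← add_div, eq_div_iff hD]; ring)

lemma cr_comb (B0 B1 : ℝ × ℝ) (a c x y : ℝ) (hD : B0.1 * B1.2 - B0.2 * B1.1 ≠ 0)
    (ha : a ≠ 0) (hc : c ≠ 0) (hy : y ≠ 0) :
    crossRatio (a • B0) (c • B1) (B0 + B1) (x • B0 + y • B1) = x / y := by
  obtain ⟨p, s⟩ := B0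
  obtain ⟨r, t⟩ := B1
  simp only [crossRatio, Prod.smul_fst, Prod.smul_snd, Prod.fst_add, Prod.snd_add,
    smul_eq_mul] at *
  have hdne : (a * p * (x * s + y * t) - a * s * (x * p + y * r)) *
      (c * r * (s + t) - c * t * (p + r)) ≠ 0 := by
    have hden : (a * p * (x * s + y * t) - a * s * (x * p + y * r)) *
        (c * r * (s + t) - c * t * (p + r)) = -(a * c * y * (p * t - s * r) ^ 2) := by
      ring
    rw [hden]
    exact neg_ne_zero.mpr (mul_ne_zero (mul_ne_zero (mul_ne_zero ha hc) hy)
      (pow_ne_zero 2 hD))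
  rw [div_eq_div_iff hdne hy]
  ring

/-- Given `k ≥ 4` pairwise distinct lines through the origin of ℝ²
(spanned by nonzero vectors `v i`), there is a lattice meeting each line
nontrivially iff the cross-ratio of every four of the lines is rational. -/
theorem stmt_3 (k : ℕ) (hk : 4 ≤ k) (v : Fin k → ℝ × ℝ) (hne : ∀ i, v i ≠ 0)
    (hdist : ∀ i j, i ≠ j → (v i).1 * (v j).2 - (v i).2 * (v j).1 ≠ 0) :
    (∃ b : Module.Basis (Fin 2) ℝ (ℝ × ℝ), ∀ i, ∃ w : ℝ × ℝ,
        w ∈ Submodule.span ℤ (Set.range b) ∧ w ≠ 0 ∧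
        w ∈ Submodule.span ℝ {v i}) ↔
    (∀ i j l m : Fin k, i ≠ j → i ≠ l → i ≠ m → j ≠ l → j ≠ m → l ≠ m →
        ∃ q : ℚ, crossRatio (v i) (v j) (v l) (v m) = (q : ℝ)) := by
  constructor
  · rintro ⟨b, hb⟩ i j l m hij hil him hjl hjm hlm
    have key : ∀ i : Fin k, ∃ (t : ℝ) (n n' : ℤ), t ≠ 0 ∧
        t * (v i).1 = (n : ℝ) * (b 0).1 + (n' : ℝ) * (b 1).1 ∧
        t * (v i).2 = (n : ℝ) * (b 0).2 + (n' : ℝ) * (b 1).2 := by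
      intro i
      obtain ⟨w, hw1, hw2, hw3⟩ := hb i
      obtain ⟨t, ht⟩ := Submodule.mem_span_singleton.mp hw3
      obtain ⟨cc, hcc⟩ := (Submodule.mem_span_range_iff_exists_fun ℤ).mp hw1
      have hts : t • v i = (cc 0 : ℝ) • b 0 + (cc 1 : ℝ) • b 1 := by
        rw [ht, ← hcc, Fin.sum_univ_two, Int.cast_smul_eq_zsmul, Int.cast_smul_eq_zsmul]
      refine ⟨t, cc 0, cc 1, ?_, ?_, ?_⟩
      · rintro rfl; rw [zero_smul] at ht; exact hw2 ht.symm
      · have := congrArg Prod.fst hts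
        simpa [smul_eq_mul] using this
      · have := congrArg Prod.snd hts
        simpa [smul_eq_mul] using this
    obtain ⟨ti, ai, bi, hti, hi1, hi2⟩ := key i
    obtain ⟨tj, aj, bj, htj, hj1, hj2⟩ := key j
    obtain ⟨tl, al, bl, htl, hl1, hl2⟩ := key l
    obtain ⟨tm, am, bm, htm, hm1, hm2⟩ := key m
    set D : ℝ := (b 0).1 * (b 1).2 - (b 0).2 * (b 1).1 with hDdef
    have H : ∀ (t t' : ℝ) (n n' p p' : ℤ) (P P' : ℝ × ℝ),
        t * P.1 = (n : ℝ) * (b 0).1 + (n' : ℝ) * (b 1).1 →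
        t * P.2 = (n : ℝ) * (b 0).2 + (n' : ℝ) * (b 1).2 →
        t' * P'.1 = (p : ℝ) * (b 0).1 + (p' : ℝ) * (b 1).1 →
        t' * P'.2 = (p : ℝ) * (b 0).2 + (p' : ℝ) * (b 1).2 →
        t * t' * (P.1 * P'.2 - P.2 * P'.1) = ((n : ℝ) * p' - (n' : ℝ) * p) * D := by
      intro t t' n n' p p' P P' e1 e2 e3 e4
      rw [hDdef]
      linear_combination (t' * P'.2) * e1 + ((n : ℝ) * (b 0).1 + (n' : ℝ) * (b 1).1) * e4
        - (t' * P'.1) * e2 - ((n : ℝ) * (b 0).2 + (n' : ℝ) * (b 1).2) * e3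
    have h_il := H ti tl ai bi al bl (v i) (v l) hi1 hi2 hl1 hl2
    have h_jm := H tj tm aj bj am bm (v j) (v m) hj1 hj2 hm1 hm2
    have h_im := H ti tm ai bi am bm (v i) (v m) hi1 hi2 hm1 hm2
    have h_jl := H tj tl aj bj al bl (v j) (v l) hj1 hj2 hl1 hl2
    have hDim : (v i).1 * (v m).2 - (v i).2 * (v m).1 ≠ 0 := hdist i m him
    have hDjl : (v j).1 * (v l).2 - (v j).2 * (v l).1 ≠ 0 := hdist j l hjl
    have hCD : ((ai : ℝ) * bm - (bi : ℝ) * am) * D ≠ 0 := by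
      rw [← h_im]; exact mul_ne_zero (mul_ne_zero hti htm) hDim
    have hED : ((aj : ℝ) * bl - (bj : ℝ) * al) * D ≠ 0 := by
      rw [← h_jl]; exact mul_ne_zero (mul_ne_zero htj htl) hDjl
    have hC : ((ai : ℝ) * bm - (bi : ℝ) * am) ≠ 0 := (mul_ne_zero_iff.mp hCD).1
    have hE : ((aj : ℝ) * bl - (bj : ℝ) * al) ≠ 0 := (mul_ne_zero_iff.mp hED).1
    have hD : D ≠ 0 := (mul_ne_zero_iff.mp hCD).2
    refine ⟨(((ai * bl - bi * al) * (aj * bm - bj * am) : ℤ) : ℚ) /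
            (((ai * bm - bi * am) * (aj * bl - bj * al) : ℤ) : ℚ), ?_⟩
    have eDil : (v i).1 * (v l).2 - (v i).2 * (v l).1 =
        ((ai : ℝ) * bl - (bi : ℝ) * al) * D / (ti * tl) := by
      rw [eq_div_iff (mul_ne_zero hti htl)]; linear_combination h_il
    have eDjm : (v j).1 * (v m).2 - (v j).2 * (v m).1 =
        ((aj : ℝ) * bm - (bj : ℝ) * am) * D / (tj * tm) := by
      rw [eq_div_iff (mul_ne_zero htj htm)]; linear_combination h_jm
    have eDim : (v i).1 * (v m).2 - (v i).2 * (v m).1 =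
        ((ai : ℝ) * bm - (bi : ℝ) * am) * D / (ti * tm) := by
      rw [eq_div_iff (mul_ne_zero hti htm)]; linear_combination h_im
    have eDjl : (v j).1 * (v l).2 - (v j).2 * (v l).1 =
        ((aj : ℝ) * bl - (bj : ℝ) * al) * D / (tj * tl) := by
      rw [eq_div_iff (mul_ne_zero htj htl)]; linear_combination h_jl
    simp only [crossRatio]
    rw [eDil, eDjm, eDim, eDjl]
    push_cast
    field_simp
  · intro hcr
    obtain ⟨i0, hi0⟩ : ∃ i : Fin k, i.val = 0 := ⟨⟨0, by omega⟩, rfl⟩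
    obtain ⟨i1, hi1⟩ : ∃ i : Fin k, i.val = 1 := ⟨⟨1, by omega⟩, rfl⟩
    obtain ⟨i2, hi2⟩ : ∃ i : Fin k, i.val = 2 := ⟨⟨2, by omega⟩, rfl⟩
    have hne01 : i0 ≠ i1 := by apply Fin.ne_of_val_ne; omega
    have hne02 : i0 ≠ i2 := by apply Fin.ne_of_val_ne; omega
    have hne12 : i1 ≠ i2 := by apply Fin.ne_of_val_ne; omega
    set u0 := v i0 with hu0def
    set u1 := v i1 with hu1def
    set u2 := v i2 with hu2def
    have hD0 : u0.1 * u1.2 - u0.2 * u1.1 ≠ 0 := hdist i0 i1 hne01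
    set a : ℝ := (u2.1 * u1.2 - u2.2 * u1.1) / (u0.1 * u1.2 - u0.2 * u1.1) with hadef
    set c : ℝ := (u0.1 * u2.2 - u0.2 * u2.1) / (u0.1 * u1.2 - u0.2 * u1.1) with hcdef
    have ha : a ≠ 0 := div_ne_zero (hdist i2 i1 hne12.symm) hD0
    have hc : c ≠ 0 := div_ne_zero (hdist i0 i2 hne02) hD0
    set b0 : ℝ × ℝ := a • u0 with hb0def
    set b1 : ℝ × ℝ := c • u1 with hb1def
    have hDb : b0.1 * b1.2 - b0.2 * b1.1 ≠ 0 := by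
      have : b0.1 * b1.2 - b0.2 * b1.1 = a * c * (u0.1 * u1.2 - u0.2 * u1.1) := by
        simp only [hb0def, hb1def, Prod.smul_fst, Prod.smul_snd, smul_eq_mul]; ring
      rw [this]; exact mul_ne_zero (mul_ne_zero ha hc) hD0
    have hsum : b0 + b1 = u2 := by
      apply Prod.ext_iff.mpr
      constructor <;>
        (simp only [hb0def, hb1def, hadef, hcdef, Prod.fst_add, Prod.snd_add,
          Prod.smul_fst, Prod.smul_snd, smul_eq_mul];
         rw [div_mul_eq_mul_div, div_mul_eq_mul_div, ← add_div, div_eq_iff hD0]; ring)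
    refine ⟨pairBasis hDb, ?_⟩
    intro i
    have hb0mem : b0 ∈ Submodule.span ℤ (Set.range ⇑(pairBasis hDb)) :=
      Submodule.subset_span ⟨0, pairBasis_zero hDb⟩
    have hb1mem : b1 ∈ Submodule.span ℤ (Set.range ⇑(pairBasis hDb)) :=
      Submodule.subset_span ⟨1, pairBasis_one hDb⟩
    by_cases h0 : i = i0
    · refine ⟨b0, hb0mem, ?_, ?_⟩
      · exact smul_ne_zero ha (hne i0)
      · rw [h0]; exact Submodule.mem_span_singleton.mpr ⟨a, rfl⟩
    by_cases h1 : i = i1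
    · refine ⟨b1, hb1mem, ?_, ?_⟩
      · exact smul_ne_zero hc (hne i1)
      · rw [h1]; exact Submodule.mem_span_singleton.mpr ⟨c, rfl⟩
    by_cases h2 : i = i2
    · refine ⟨b0 + b1, Submodule.add_mem _ hb0mem hb1mem, ?_, ?_⟩
      · rw [hsum]; exact hne i2
      · rw [h2]; exact Submodule.mem_span_singleton.mpr ⟨1, by rw [one_smul, hsum]⟩
    -- general case
    set x : ℝ := ((v i).1 * b1.2 - (v i).2 * b1.1) / (b0.1 * b1.2 - b0.2 * b1.1) with hxdef
    set y : ℝ := (b0.1 * (v i).2 - b0.2 * (v i).1) / (b0.1 * b1.2 - b0.2 * b1.1) with hydef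
    have hxy : v i = x • b0 + y • b1 := cramer2 b0 b1 (v i) hDb
    have hx : x ≠ 0 := by
      apply div_ne_zero _ hDb
      have : (v i).1 * b1.2 - (v i).2 * b1.1 = c * ((v i).1 * u1.2 - (v i).2 * u1.1) := by
        simp only [hb1def, Prod.smul_fst, Prod.smul_snd, smul_eq_mul]; ring
      rw [this]; exact mul_ne_zero hc (hdist i i1 h1)
    have hy : y ≠ 0 := by
      apply div_ne_zero _ hDb
      have : b0.1 * (v i).2 - b0.2 * (v i).1 = a * (u0.1 * (v i).2 - u0.2 * (v i).1) := by
        simp only [hb0def, Prod.smul_fst, Prod.smul_snd, smul_eq_mul]; ring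
      rw [this]; exact mul_ne_zero ha (hdist i0 i (Ne.symm h0))
    obtain ⟨q, hq⟩ := hcr i0 i1 i2 i hne01 hne02 (Ne.symm h0) hne12 (Ne.symm h1) (Ne.symm h2)
    have hu0' : u0 = a⁻¹ • b0 := by
      rw [hb0def, smul_smul, inv_mul_cancel₀ ha, one_smul]
    have hu1' : u1 = c⁻¹ • b1 := by
      rw [hb1def, smul_smul, inv_mul_cancel₀ hc, one_smul]
    have hq' : x / y = (q : ℝ) := by
      rw [← cr_comb b0 b1 a⁻¹ c⁻¹ x y hDb (inv_ne_zero ha) (inv_ne_zero hc) hy,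
        ← hu0', ← hu1', hsum, ← hxy]
      exact hq
    have hx_eq : x = (q : ℝ) * y := (div_eq_iff hy).mp hq'
    have hdenne : ((q.den : ℝ)) ≠ 0 := by
      exact_mod_cast q.den_nz
    have hnum : (q : ℝ) * (q.den : ℝ) = (q.num : ℝ) := by
      rw [Rat.cast_def]; field_simp
    clear_value u0 u1 u2 a c b0 b1 x y
    refine ⟨q.num • pairBasis hDb 0 + (q.den : ℤ) • pairBasis hDb 1, ?_, ?_, ?_⟩
    · exact Submodule.add_mem _
        (Submodule.smul_mem _ _ (Submodule.subset_span ⟨0, rfl⟩))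
        (Submodule.smul_mem _ _ (Submodule.subset_span ⟨1, rfl⟩))
    · rw [pairBasis_zero hDb, pairBasis_one hDb, ← Int.cast_smul_eq_zsmul ℝ,
        ← Int.cast_smul_eq_zsmul ℝ]
      intro hzero
      have := ((LinearIndependent.pair_iff.mp (pair_li hDb)) _ _ hzero).2
      rw [Int.cast_natCast] at this
      exact hdenne this
    · apply Submodule.mem_span_singleton.mpr
      refine ⟨(q.den : ℝ) / y, ?_⟩
      have e1 : (q.den : ℝ) / y * x = ((q.num : ℤ) : ℝ) := by
        rw [hx_eq]
        have hstep : (q.den : ℝ) / y * ((q : ℝ) * y) =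
            (q : ℝ) * (q.den : ℝ) * (y / y) := by ring
        rw [hstep, div_self hy, mul_one, hnum]
      have e2 : (q.den : ℝ) / y * y = ((q.den : ℤ) : ℝ) := by
        rw [div_mul_cancel₀ _ hy]; push_cast; ring
      rw [pairBasis_zero hDb, pairBasis_one hDb, ← Int.cast_smul_eq_zsmul ℝ,
        ← Int.cast_smul_eq_zsmul ℝ, hxy, smul_add, smul_smul, smul_smul, e1, e2]
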